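/- Let G be a digraph on vertex set V. For any two vertex sets Z, Y ⊆ V (not necessarily disjoint), the path rank and the edge rank satisfy the duality: min(|Z|,|Y|) − ρ_G(Z,Y) = |V| − max(|Z|,|Y|) − r_G(V\Y, V\Z), where ρ_G(Z,Y) is the maximum number of vertex-disjoint directed paths from Y to Z and r_G(V\Y, V\Z) is the maximum matching from V\Z to V\Y via edges of G with self-matches allowed. -/

import Mathlib

open Classical

/-- A directed path in a digraph `G`: a nonempty list of distinct vertices,
consecutive ones joined by edges of `G`. -/
def IsDiPath {V : Type*} (G : V → V → Prop) (p : List V) : Prop :=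
  p ≠ [] ∧ p.Chain' G ∧ p.Nodup

/-- A family of vertex-disjoint directed paths from `Y` to `Z` in `G`. -/
def PathFamily {V : Type*} (G : V → V → Prop) (Z Y : Finset V)
    (P : Finset (List V)) : Prop :=
  (∀ p ∈ P, IsDiPath G p ∧ (∃ a ∈ Y, p.head? = some a) ∧ (∃ b ∈ Z, p.getLast? = some b)) ∧
  (P : Set (List V)).Pairwise fun p q => ∀ v, v ∈ p → v ∉ q

/-- The path rank `ρ_G(Z, Y)`: the maximum number of vertex-disjoint directed
paths from `Y` to `Z` in `G`. -/
noncomputable def pathRank {V : Type*} (G : V → V → Prop) (Z Y : Finset V) : ℕ :=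
  sSup {k | ∃ P : Finset (List V), PathFamily G Z Y P ∧ P.card = k}

/-- The edge rank `r_G(Z, Y)`: the maximum size of a bipartite matching from `Y`
to `Z` via edges of `G`, with self-matches allowed for elements of `Y ∩ Z`. -/
noncomputable def edgeRank {V : Type*} (G : V → V → Prop) (Z Y : Finset V) : ℕ :=
  sSup {k | ∃ s : Finset (V × V), s.card = k ∧
    (∀ p ∈ s, p.1 ∈ Y ∧ p.2 ∈ Z ∧ (G p.1 p.2 ∨ p.1 = p.2)) ∧
    (∀ p ∈ s, ∀ q ∈ s, p.1 = q.1 → p = q) ∧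
    (∀ p ∈ s, ∀ q ∈ s, p.2 = q.2 → p = q)}

set_option linter.unusedSectionVars false
section
variable {V : Type*} [Fintype V] [DecidableEq V] {G : V → V → Prop} {Z Y : Finset V}

lemma pathFamily_card_le {P : Finset (List V)} (h : PathFamily G Z Y P) :
    P.card ≤ Fintype.card V + 1 := by
  have hinj : Set.InjOn (fun p : List V => p.head?) P := by
    intro p hp q hq hpq
    by_contra hne
    simp only at hpq
    obtain ⟨a, -, ha⟩ := (h.1 p hp).2.1
    have hap : a ∈ p := List.mem_of_mem_head? (by simp [ha])
    have haq : a ∈ q := List.mem_of_mem_head? (by rw [← hpq]; simp [ha])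
    exact h.2 hp hq hne a hap haq
  calc P.card = (P.image (fun p : List V => p.head?)).card :=
        (Finset.card_image_of_injOn hinj).symm
    _ ≤ Fintype.card (Option V) := Finset.card_le_univ _
    _ = Fintype.card V + 1 := by simp

lemma bddAbove_pathFamily :
    BddAbove {k | ∃ P : Finset (List V), PathFamily G Z Y P ∧ P.card = k} :=
  ⟨Fintype.card V + 1, fun _ ⟨_, hP, hc⟩ => hc ▸ pathFamily_card_le hP⟩

lemma le_pathRank {P : Finset (List V)} (h : PathFamily G Z Y P) :
    P.card ≤ pathRank G Z Y :=
  le_csSup bddAbove_pathFamily ⟨P, h, rfl⟩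

lemma pathFamily_empty : PathFamily G Z Y (∅ : Finset (List V)) := by
  constructor <;> simp

lemma pathRank_spec :
    ∃ P : Finset (List V), PathFamily G Z Y P ∧ P.card = pathRank G Z Y := by
  have h := Nat.sSup_mem
    (s := {k | ∃ P : Finset (List V), PathFamily G Z Y P ∧ P.card = k})
    ⟨0, ∅, pathFamily_empty, rfl⟩ bddAbove_pathFamily
  exact h

def IsMatching (G : V → V → Prop) (Z Y : Finset V) (s : Finset (V × V)) : Prop :=
  (∀ p ∈ s, p.1 ∈ Y ∧ p.2 ∈ Z ∧ (G p.1 p.2 ∨ p.1 = p.2)) ∧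
  (∀ p ∈ s, ∀ q ∈ s, p.1 = q.1 → p = q) ∧
  (∀ p ∈ s, ∀ q ∈ s, p.2 = q.2 → p = q)

lemma bddAbove_matching :
    BddAbove {k | ∃ s : Finset (V × V), s.card = k ∧
      (∀ p ∈ s, p.1 ∈ Y ∧ p.2 ∈ Z ∧ (G p.1 p.2 ∨ p.1 = p.2)) ∧
      (∀ p ∈ s, ∀ q ∈ s, p.1 = q.1 → p = q) ∧
      (∀ p ∈ s, ∀ q ∈ s, p.2 = q.2 → p = q)} :=
  ⟨Fintype.card (V × V), fun _ ⟨s, hc, _⟩ => hc ▸ Finset.card_le_univ s⟩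

lemma le_edgeRank {s : Finset (V × V)} (h : IsMatching G Z Y s) :
    s.card ≤ edgeRank G Z Y :=
  le_csSup bddAbove_matching ⟨s, rfl, h.1, h.2.1, h.2.2⟩

lemma edgeRank_spec :
    ∃ s : Finset (V × V), IsMatching G Z Y s ∧ s.card = edgeRank G Z Y := by
  have h := Nat.sSup_mem
    (s := {k | ∃ s : Finset (V × V), s.card = k ∧
      (∀ p ∈ s, p.1 ∈ Y ∧ p.2 ∈ Z ∧ (G p.1 p.2 ∨ p.1 = p.2)) ∧
      (∀ p ∈ s, ∀ q ∈ s, p.1 = q.1 → p = q) ∧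
      (∀ p ∈ s, ∀ q ∈ s, p.2 = q.2 → p = q)}) ⟨0, ∅, by simp⟩ bddAbove_matching
  obtain ⟨s, hc, h1, h2, h3⟩ := h
  exact ⟨s, ⟨h1, h2, h3⟩, hc⟩

end
section
variable {V : Type*} [Fintype V] [DecidableEq V]

lemma matching_base {G : V → V → Prop} (A Y Z : Finset V) (s : Finset (V × V))
    (hY : Y ⊆ A) (hZ : Z ⊆ A)
    (hs : ∀ p ∈ s, p.1 ∈ A \ Z ∧ p.2 ∈ A \ Y ∧ (G p.1 p.2 ∨ p.1 = p.2))
    (h1 : ∀ p ∈ s, ∀ q ∈ s, p.1 = q.1 → p = q)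
    (hsrc : ∀ p ∈ s, p.1 ∈ s.image Prod.snd) :
    ∃ P : Finset (List V), PathFamily G Z Y P ∧
      (∀ p ∈ P, ∀ v ∈ p, v ∈ s.image Prod.fst ∪ s.image Prod.snd ∪ Y ∩ Z) ∧
      s.card + Y.card + Z.card ≤ P.card + A.card := by
  refine ⟨(Y ∩ Z).image fun v => [v], ⟨?_, ?_⟩, ?_, ?_⟩
  · intro p hp
    obtain ⟨v, hv, rfl⟩ := Finset.mem_image.1 hp
    rw [Finset.mem_inter] at hv
    exact ⟨⟨List.cons_ne_nil _ _, List.isChain_singleton _, List.nodup_singleton _⟩,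
      ⟨v, hv.1, rfl⟩, ⟨v, hv.2, rfl⟩⟩
  · intro p hp q hq hne v hvp hvq
    obtain ⟨x, hx, rfl⟩ := Finset.mem_image.1 hp
    obtain ⟨y, hy, rfl⟩ := Finset.mem_image.1 hq
    simp only [List.mem_singleton] at hvp hvq
    exact hne (by rw [hvp] at hvq; rw [hvq])
  · intro p hp v hv
    obtain ⟨x, hx, rfl⟩ := Finset.mem_image.1 hp
    simp only [List.mem_singleton] at hv
    subst hv
    exact Finset.mem_union_right _ hx
  · have hcard : ((Y ∩ Z).image fun v => [v]).card = (Y ∩ Z).card :=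
      Finset.card_image_of_injOn (fun x _ y _ h => by simpa using h)
    have hinj : s.card = (s.image Prod.fst).card :=
      (Finset.card_image_of_injOn (fun p hp q hq h => h1 p hp q hq h)).symm
    have hsub : s.image Prod.fst ⊆ A \ (Y ∪ Z) := by
      intro x hx
      obtain ⟨p, hp, rfl⟩ := Finset.mem_image.1 hx
      have h3 := (hs p hp).1
      obtain ⟨q, hq, hq2⟩ := Finset.mem_image.1 (hsrc p hp)
      have h4 := (hs q hq).2.1
      rw [Finset.mem_sdiff] at h3 h4 ⊢
      rw [hq2] at h4
      simp only [Finset.mem_union]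
      exact ⟨h3.1, fun h => h.elim h4.2 h3.2⟩
    have h5 : s.card ≤ (A \ (Y ∪ Z)).card := hinj ▸ Finset.card_le_card hsub
    have h6 : (A \ (Y ∪ Z)).card + (Y ∪ Z).card = A.card :=
      Finset.card_sdiff_add_card_eq_card (Finset.union_subset hY hZ)
    have h7 := Finset.card_union_add_card_inter Y Z
    omega

lemma exists_pathFamily_of_matching (G : V → V → Prop) :
    ∀ n (A Y Z : Finset V) (s : Finset (V × V)),
      Y ⊆ A → Z ⊆ A →
      (∀ p ∈ s, p.1 ∈ A \ Z ∧ p.2 ∈ A \ Y ∧ (G p.1 p.2 ∨ p.1 = p.2)) →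
      (∀ p ∈ s, ∀ q ∈ s, p.1 = q.1 → p = q) →
      (∀ p ∈ s, ∀ q ∈ s, p.2 = q.2 → p = q) →
      (s.filter fun p => p.1 ≠ p.2).card = n →
      ∃ P : Finset (List V), PathFamily G Z Y P ∧
        (∀ p ∈ P, ∀ v ∈ p, v ∈ s.image Prod.fst ∪ s.image Prod.snd ∪ Y ∩ Z) ∧
        s.card + Y.card + Z.card ≤ P.card + A.card := by
  intro n
  induction n using Nat.strong_induction_on with
  | _ n IH =>
  intro A Y Z s hY hZ hs h1 h2 hn
  by_cases hsrc : ∀ p ∈ s, p.1 ∈ s.image Prod.snd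
  · exact matching_base A Y Z s hY hZ hs h1 hsrc
  · push_neg at hsrc
    obtain ⟨e, hes, hesrc⟩ := hsrc
    obtain ⟨a, b⟩ := e
    have hne : a ≠ b := by
      intro h
      exact hesrc (Finset.mem_image.2 ⟨(a, b), hes, h.symm⟩)
    have haZ : a ∈ A \ Z := (hs _ hes).1
    have hbY : b ∈ A \ Y := (hs _ hes).2.1
    have hG : G a b := (hs _ hes).2.2.resolve_right hne
    have haA : a ∈ A := (Finset.mem_sdiff.1 haZ).1
    have haZ' : a ∉ Z := (Finset.mem_sdiff.1 haZ).2
    have hbA : b ∈ A := (Finset.mem_sdiff.1 hbY).1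
    have hbY' : b ∉ Y := (Finset.mem_sdiff.1 hbY).2
    set s' := s.erase (a, b) with hs'def
    set Y' := insert b Y with hY'def
    have hs'sub : s' ⊆ s := Finset.erase_subset _ _
    have hfst : ∀ p ∈ s', p.1 ≠ a := by
      intro p hp h
      exact (Finset.mem_erase.1 hp).1 (h1 p (hs'sub hp) (a, b) hes h)
    have hsnd : ∀ p ∈ s', p.2 ≠ b := by
      intro p hp h
      exact (Finset.mem_erase.1 hp).1 (h2 p (hs'sub hp) (a, b) hes h)
    have hsnda : ∀ p ∈ s', p.2 ≠ a := by
      intro p hp h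
      exact hesrc (Finset.mem_image.2 ⟨p, hs'sub hp, h⟩)
    have hcards : s'.card + 1 = s.card := by
      rw [hs'def, Finset.card_erase_of_mem hes]
      have : 0 < s.card := Finset.card_pos.2 ⟨_, hes⟩
      omega
    have hfiltlt : ((s'.filter fun p => p.1 ≠ p.2).card) < n := by
      rw [hs'def, Finset.filter_erase, ← hn]
      exact Finset.card_erase_lt_of_mem (Finset.mem_filter.2 ⟨hes, hne⟩)
    have h1' : ∀ p ∈ s', ∀ q ∈ s', p.1 = q.1 → p = q :=
      fun p hp q hq h => h1 p (hs'sub hp) q (hs'sub hq) h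
    have h2' : ∀ p ∈ s', ∀ q ∈ s', p.2 = q.2 → p = q :=
      fun p hp q hq h => h2 p (hs'sub hp) q (hs'sub hq) h
    have hbs : b ∈ s.image Prod.snd := Finset.mem_image.2 ⟨(a, b), hes, rfl⟩
    have has : a ∈ s.image Prod.fst := Finset.mem_image.2 ⟨(a, b), hes, rfl⟩
    have hverts' : ∀ v, v ∈ s'.image Prod.fst ∪ s'.image Prod.snd ∪ Y' ∩ Z →
        v ∈ s.image Prod.fst ∪ s.image Prod.snd ∪ Y ∩ Z := by
      intro v hv
      rcases Finset.mem_union.1 hv with hv | hv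
      · rcases Finset.mem_union.1 hv with hv | hv
        · exact Finset.mem_union_left _ (Finset.mem_union_left _
            (Finset.image_subset_image hs'sub hv))
        · exact Finset.mem_union_left _ (Finset.mem_union_right _
            (Finset.image_subset_image hs'sub hv))
      · rw [Finset.mem_inter, hY'def, Finset.mem_insert] at hv
        rcases hv.1 with rfl | hvy
        · exact Finset.mem_union_left _ (Finset.mem_union_right _ hbs)
        · exact Finset.mem_union_right _ (Finset.mem_inter.2 ⟨hvy, hv.2⟩)
    by_cases haY : a ∈ Y
    · -- case a ∈ Y : keep A
      have hY'A : Y' ⊆ A := Finset.insert_subset hbA hY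
      have hs' : ∀ p ∈ s', p.1 ∈ A \ Z ∧ p.2 ∈ A \ Y' ∧ (G p.1 p.2 ∨ p.1 = p.2) := by
        intro p hp
        obtain ⟨hp1, hp2, hp3⟩ := hs p (hs'sub hp)
        refine ⟨hp1, ?_, hp3⟩
        rw [Finset.mem_sdiff] at hp2 ⊢
        rw [hY'def]
        simp only [Finset.mem_insert]
        exact ⟨hp2.1, fun h => h.elim (hsnd p hp) hp2.2⟩
      obtain ⟨P', hPfam, hPverts, hPineq⟩ :=
        IH _ hfiltlt A Y' Z s' hY'A hZ hs' h1' h2' rfl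
      have haP : ∀ p ∈ P', a ∉ p := by
        intro p hp hap
        rcases Finset.mem_union.1 (hPverts p hp a hap) with hv | hv
        · rcases Finset.mem_union.1 hv with hv | hv
          · obtain ⟨q, hq, hq2⟩ := Finset.mem_image.1 hv
            exact hfst q hq hq2
          · obtain ⟨q, hq, hq2⟩ := Finset.mem_image.1 hv
            exact hsnda q hq hq2
        · exact haZ' (Finset.mem_inter.1 hv).2
      by_cases hb : ∃ p ∈ P', p.head? = some b
      · obtain ⟨p₀, hp₀, hp₀b⟩ := hb
        obtain ⟨c, l, hp₀eq⟩ := List.exists_cons_of_ne_nil (hPfam.1 p₀ hp₀).1.1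
        have hcb : c = b := by rw [hp₀eq] at hp₀b; simpa using hp₀b
        rw [hcb] at hp₀eq
        subst hp₀eq
        refine ⟨insert (a :: b :: l) (P'.erase (b :: l)), ⟨?_, ?_⟩, ?_, ?_⟩
        · intro q hq
          rcases Finset.mem_insert.1 hq with rfl | hq
          · obtain ⟨⟨-, hch, hnd⟩, -, hlast⟩ := hPfam.1 _ hp₀
            refine ⟨⟨List.cons_ne_nil _ _, List.isChain_cons_cons.2 ⟨hG, hch⟩,
              List.nodup_cons.2 ⟨haP _ hp₀, hnd⟩⟩, ⟨a, haY, rfl⟩, ?_⟩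
            obtain ⟨z, hz, hz2⟩ := hlast
            exact ⟨z, hz, by rw [List.getLast?_cons_cons]; exact hz2⟩
          · have hq' := Finset.mem_of_mem_erase hq
            obtain ⟨hdp, ⟨c', hc', hc'2⟩, hlast⟩ := hPfam.1 _ hq'
            refine ⟨hdp, ⟨c', ?_, hc'2⟩, hlast⟩
            rw [hY'def, Finset.mem_insert] at hc'
            rcases hc' with hc'b | hc'
            · exfalso
              have hcq : c' ∈ q := List.mem_of_mem_head? (by simp [hc'2])
              have hqne : q ≠ b :: l := (Finset.mem_erase.1 hq).1
              exact hPfam.2 (Finset.mem_coe.2 hq') (Finset.mem_coe.2 hp₀)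
                hqne c' hcq (by rw [hc'b]; exact List.mem_cons_self)
            · exact hc'
        · intro p hp q hq hpq v hvp hvq
          simp only [Finset.coe_insert, Set.mem_insert_iff, Finset.mem_coe] at hp hq
          rcases hp with rfl | hp <;> rcases hq with rfl | hq
          · exact hpq rfl
          · have hq' := Finset.mem_of_mem_erase hq
            rcases List.mem_cons.1 hvp with rfl | hvp'
            · exact haP q hq' hvq
            · have hqne : q ≠ b :: l := (Finset.mem_erase.1 hq).1
              exact hPfam.2 (Finset.mem_coe.2 hp₀) (Finset.mem_coe.2 hq') hqne.symm v hvp' hvq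
          · have hp' := Finset.mem_of_mem_erase hp
            rcases List.mem_cons.1 hvq with rfl | hvq'
            · exact haP p hp' hvp
            · have hpne : p ≠ b :: l := (Finset.mem_erase.1 hp).1
              exact hPfam.2 (Finset.mem_coe.2 hp') (Finset.mem_coe.2 hp₀) hpne v hvp hvq'
          · exact hPfam.2 (Finset.mem_coe.2 (Finset.mem_of_mem_erase hp))
              (Finset.mem_coe.2 (Finset.mem_of_mem_erase hq)) hpq v hvp hvq
        · intro p hp v hv
          rcases Finset.mem_insert.1 hp with rfl | hp
          · rcases List.mem_cons.1 hv with rfl | hv'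
            · exact Finset.mem_union_left _ (Finset.mem_union_left _ has)
            · exact hverts' v (hPverts _ hp₀ v hv')
          · exact hverts' v (hPverts _ (Finset.mem_of_mem_erase hp) v hv)
        · have hnotmem : (a :: b :: l) ∉ P'.erase (b :: l) := by
            intro h
            exact haP _ (Finset.mem_of_mem_erase h) (List.mem_cons_self)
          rw [Finset.card_insert_of_notMem hnotmem, Finset.card_erase_of_mem hp₀]
          have hP'pos : 0 < P'.card := Finset.card_pos.2 ⟨_, hp₀⟩
          have hYc : Y'.card = Y.card + 1 := Finset.card_insert_of_notMem hbY'
          omega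
      · push_neg at hb
        refine ⟨P', ⟨?_, hPfam.2⟩, fun p hp v hv => hverts' v (hPverts p hp v hv), ?_⟩
        · intro p hp
          obtain ⟨hdp, ⟨c', hc', hc'2⟩, hlast⟩ := hPfam.1 p hp
          refine ⟨hdp, ⟨c', ?_, hc'2⟩, hlast⟩
          rw [hY'def, Finset.mem_insert] at hc'
          rcases hc' with hc'b | hc'
          · exact absurd (hc'b ▸ hc'2) (hb p hp)
          · exact hc'
        · have hYc : Y'.card = Y.card + 1 := Finset.card_insert_of_notMem hbY'
          omega
    · -- case a ∉ Y : shrink A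
      set A' := A.erase a with hA'def
      have hA'c : A'.card + 1 = A.card := by
        rw [hA'def, Finset.card_erase_of_mem haA]
        have : 0 < A.card := Finset.card_pos.2 ⟨_, haA⟩
        omega
      have hY'A : Y' ⊆ A' := by
        rw [hY'def]
        refine Finset.insert_subset (Finset.mem_erase.2 ⟨(Ne.symm hne), hbA⟩) ?_
        intro v hv
        exact Finset.mem_erase.2 ⟨fun h => haY (h ▸ hv), hY hv⟩
      have hZA : Z ⊆ A' := fun v hv =>
        Finset.mem_erase.2 ⟨fun h => haZ' (h ▸ hv), hZ hv⟩
      have hs' : ∀ p ∈ s', p.1 ∈ A' \ Z ∧ p.2 ∈ A' \ Y' ∧ (G p.1 p.2 ∨ p.1 = p.2) := by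
        intro p hp
        obtain ⟨hp1, hp2, hp3⟩ := hs p (hs'sub hp)
        rw [Finset.mem_sdiff] at hp1 hp2
        refine ⟨Finset.mem_sdiff.2 ⟨Finset.mem_erase.2 ⟨hfst p hp, hp1.1⟩, hp1.2⟩,
          Finset.mem_sdiff.2 ⟨Finset.mem_erase.2 ⟨hsnda p hp, hp2.1⟩, ?_⟩, hp3⟩
        rw [hY'def]
        simp only [Finset.mem_insert]
        exact fun h => h.elim (hsnd p hp) hp2.2
      obtain ⟨P', hPfam, hPverts, hPineq⟩ :=
        IH _ hfiltlt A' Y' Z s' hY'A hZA hs' h1' h2' rfl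
      by_cases hb : ∃ p ∈ P', p.head? = some b
      · obtain ⟨p₀, hp₀, hp₀b⟩ := hb
        have hbp₀ : b ∈ p₀ := List.mem_of_mem_head? (by simp [hp₀b])
        refine ⟨P'.erase p₀, ⟨?_, hPfam.2.mono (by
          intro x hx
          exact Finset.mem_coe.2 (Finset.mem_of_mem_erase (Finset.mem_coe.1 hx)))⟩,
          ?_, ?_⟩
        · intro p hp
          have hp' := Finset.mem_of_mem_erase hp
          obtain ⟨hdp, ⟨c', hc', hc'2⟩, hlast⟩ := hPfam.1 p hp'
          refine ⟨hdp, ⟨c', ?_, hc'2⟩, hlast⟩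
          rw [hY'def, Finset.mem_insert] at hc'
          rcases hc' with hc'b | hc'
          · exfalso
            have hcq : c' ∈ p := List.mem_of_mem_head? (by simp [hc'2])
            exact hPfam.2 (Finset.mem_coe.2 hp') (Finset.mem_coe.2 hp₀)
              (Finset.mem_erase.1 hp).1 c' hcq (hc'b ▸ hbp₀)
          · exact hc'
        · intro p hp v hv
          exact hverts' v (hPverts p (Finset.mem_of_mem_erase hp) v hv)
        · rw [Finset.card_erase_of_mem hp₀]
          have hP'pos : 0 < P'.card := Finset.card_pos.2 ⟨_, hp₀⟩
          have hYc : Y'.card = Y.card + 1 := Finset.card_insert_of_notMem hbY'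
          omega
      · push_neg at hb
        refine ⟨P', ⟨?_, hPfam.2⟩, fun p hp v hv => hverts' v (hPverts p hp v hv), ?_⟩
        · intro p hp
          obtain ⟨hdp, ⟨c', hc', hc'2⟩, hlast⟩ := hPfam.1 p hp
          refine ⟨hdp, ⟨c', ?_, hc'2⟩, hlast⟩
          rw [hY'def, Finset.mem_insert] at hc'
          rcases hc' with hc'b | hc'
          · exact absurd (hc'b ▸ hc'2) (hb p hp)
          · exact hc'
        · have hYc : Y'.card = Y.card + 1 := Finset.card_insert_of_notMem hbY'
          omega

end
section
variable {V : Type*} [DecidableEq V]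

/-- Prefix of a list up to (and including) the first element in `Z`. -/
def truncZ (Z : Finset V) : List V → List V
  | [] => []
  | a :: l => if a ∈ Z then [a] else a :: truncZ Z l

/-- Suffix of a list starting at the last element in `Y`. -/
noncomputable def truncY (Y : Finset V) : List V → List V
  | [] => []
  | a :: l => if ∃ v ∈ l, v ∈ Y then truncY Y l else a :: l

lemma truncZ_prefix (Z : Finset V) (l : List V) : truncZ Z l <+: l := by
  induction l with
  | nil => simp [truncZ]
  | cons a l ih =>
    rw [truncZ]
    split
    · exact ⟨l, rfl⟩
    · exact (List.prefix_cons_inj a).2 ih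

lemma truncZ_ne_nil (Z : Finset V) {l : List V} (h : l ≠ []) : truncZ Z l ≠ [] := by
  cases l with
  | nil => exact absurd rfl h
  | cons a l => rw [truncZ]; split <;> simp

lemma truncZ_head? (Z : Finset V) (l : List V) : (truncZ Z l).head? = l.head? := by
  cases l with
  | nil => rfl
  | cons a l => rw [truncZ]; split <;> rfl

lemma truncZ_getLast {Z : Finset V} {l : List V} (h : ∃ c ∈ l, c ∈ Z) :
    ∃ d ∈ Z, (truncZ Z l).getLast? = some d := by
  induction l with
  | nil => simp at h
  | cons a l ih =>
    rw [truncZ]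
    split
    · exact ⟨a, ‹a ∈ Z›, rfl⟩
    · obtain ⟨c, hc, hcZ⟩ := h
      rcases List.mem_cons.1 hc with rfl | hc
      · exact absurd hcZ ‹¬ c ∈ Z›
      · obtain ⟨d, hd, hd2⟩ := ih ⟨c, hc, hcZ⟩
        refine ⟨d, hd, ?_⟩
        have hnn : truncZ Z l ≠ [] := truncZ_ne_nil Z (List.ne_nil_of_mem hc)
        obtain ⟨x, t, hxt⟩ := List.exists_cons_of_ne_nil hnn
        rw [hxt, List.getLast?_cons_cons, ← hxt, hd2]

lemma truncZ_dropLast {Z : Finset V} {l : List V} :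
    ∀ v ∈ (truncZ Z l).dropLast, v ∉ Z := by
  induction l with
  | nil => simp [truncZ]
  | cons a l ih =>
    rw [truncZ]
    split
    · simp
    · intro v hv
      by_cases hl : truncZ Z l = []
      · rw [hl] at hv; simp at hv
      · rw [List.dropLast_cons_of_ne_nil hl] at hv
        rcases List.mem_cons.1 hv with rfl | hv
        · exact ‹¬ v ∈ Z›
        · exact ih v hv

lemma truncY_suffix (Y : Finset V) (l : List V) : truncY Y l <:+ l := by
  induction l with
  | nil => simp [truncY]
  | cons a l ih =>
    rw [truncY]
    split
    · exact ih.trans ⟨[a], rfl⟩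
    · exact List.suffix_rfl

lemma truncY_ne_nil (Y : Finset V) {l : List V} (h : l ≠ []) : truncY Y l ≠ [] := by
  induction l with
  | nil => exact absurd rfl h
  | cons a l ih =>
    rw [truncY]
    split
    · rename_i hex
      obtain ⟨v, hv, -⟩ := hex
      exact ih (List.ne_nil_of_mem hv)
    · simp

lemma truncY_getLast? (Y : Finset V) (l : List V) :
    (truncY Y l).getLast? = l.getLast? := by
  induction l with
  | nil => rfl
  | cons a l ih =>
    rw [truncY]
    split
    · rename_i hex
      obtain ⟨v, hv, -⟩ := hex
      obtain ⟨x, t, hxt⟩ := List.exists_cons_of_ne_nil (List.ne_nil_of_mem hv)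
      rw [ih, hxt, List.getLast?_cons_cons]
    · rfl

lemma truncY_head {Y : Finset V} {l : List V} (h : ∃ v ∈ l, v ∈ Y) :
    ∃ c ∈ Y, (truncY Y l).head? = some c := by
  induction l with
  | nil => simp at h
  | cons a l ih =>
    rw [truncY]
    split
    · exact ih ‹_›
    · rename_i hnex
      obtain ⟨v, hv, hvY⟩ := h
      rcases List.mem_cons.1 hv with rfl | hv
      · exact ⟨v, hvY, rfl⟩
      · exact absurd ⟨v, hv, hvY⟩ hnex

lemma truncY_tail {Y : Finset V} {l : List V} :
    ∀ v ∈ (truncY Y l).tail, v ∉ Y := by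
  induction l with
  | nil => simp [truncY]
  | cons a l ih =>
    rw [truncY]
    split
    · exact ih
    · rename_i hnex
      intro v hv hvY
      exact hnex ⟨v, hv, hvY⟩

lemma tail_mem_of_prefix {q r : List V} (h : q <+: r) {v : V} (hv : v ∈ q.tail) :
    v ∈ r.tail := by
  obtain ⟨t, rfl⟩ := h
  cases q with
  | nil => simp at hv
  | cons a q' => simpa using Or.inl hv

/-- The truncation of a path. -/
noncomputable def truncPath (Y Z : Finset V) (p : List V) : List V :=
  truncZ Z (truncY Y p)

lemma truncPath_spec {G : V → V → Prop} {Y Z : Finset V} {p : List V}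
    (hdi : IsDiPath G p) (hhead : ∃ a ∈ Y, p.head? = some a)
    (hlast : ∃ b ∈ Z, p.getLast? = some b) :
    (truncPath Y Z p).Sublist p ∧ IsDiPath G (truncPath Y Z p) ∧
    (∃ a ∈ Y, (truncPath Y Z p).head? = some a) ∧
    (∃ b ∈ Z, (truncPath Y Z p).getLast? = some b) ∧
    (∀ v ∈ (truncPath Y Z p).tail, v ∉ Y) ∧
    (∀ v ∈ (truncPath Y Z p).dropLast, v ∉ Z) := by
  obtain ⟨hne, hch, hnd⟩ := hdi
  set r := truncY Y p with hrdef
  have hrsub : r <:+ p := truncY_suffix Y p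
  have hrne : r ≠ [] := truncY_ne_nil Y hne
  set q := truncZ Z r with hqdef
  have hqpre : q <+: r := truncZ_prefix Z r
  have hsub : q.Sublist p := hqpre.sublist.trans hrsub.sublist
  have hqne : q ≠ [] := truncZ_ne_nil Z hrne
  refine ⟨hsub, ⟨hqne, (hch.suffix hrsub).prefix hqpre, hnd.sublist hsub⟩, ?_, ?_, ?_, ?_⟩
  · obtain ⟨a, haY, ha⟩ := hhead
    have hex : ∃ v ∈ p, v ∈ Y := ⟨a, List.mem_of_mem_head? (by simp [ha]), haY⟩
    obtain ⟨c, hcY, hc⟩ := truncY_head hex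
    refine ⟨c, hcY, ?_⟩
    show (truncZ Z (truncY Y p)).head? = some c
    rw [truncZ_head?, hc]
  · have hrl : r.getLast? = p.getLast? := truncY_getLast? Y p
    obtain ⟨b, hbZ, hb⟩ := hlast
    have : ∃ c ∈ r, c ∈ Z := ⟨b, List.mem_of_mem_getLast? (by rw [hrl, hb]; simp), hbZ⟩
    exact truncZ_getLast this
  · intro v hv
    exact truncY_tail v (tail_mem_of_prefix hqpre hv)
  · exact truncZ_dropLast

end
section
variable {V : Type*} [DecidableEq V]

/-- The list of consecutive pairs of a list. -/
def adjPairs : List V → List (V × V)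
  | [] => []
  | [_] => []
  | a :: b :: l => (a, b) :: adjPairs (b :: l)

lemma adjPairs_mem {l : List V} {u v : V} (h : (u, v) ∈ adjPairs l) :
    u ∈ l.dropLast ∧ v ∈ l.tail := by
  induction l with
  | nil => simp [adjPairs] at h
  | cons a l ih =>
    cases l with
    | nil => simp [adjPairs] at h
    | cons b l' =>
      rw [adjPairs, List.mem_cons] at h
      rw [List.dropLast_cons_of_ne_nil (List.cons_ne_nil b l')]
      rcases h with h | h
      · rw [Prod.mk.injEq] at h
        obtain ⟨rfl, rfl⟩ := h
        simp
      · obtain ⟨h1, h2⟩ := ih h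
        exact ⟨List.mem_cons_of_mem a h1, List.mem_cons_of_mem b (by
          simpa using h2)⟩

lemma adjPairs_chain' {G : V → V → Prop} {l : List V} (hch : l.Chain' G)
    {u v : V} (h : (u, v) ∈ adjPairs l) : G u v := by
  induction l with
  | nil => simp [adjPairs] at h
  | cons a l ih =>
    cases l with
    | nil => simp [adjPairs] at h
    | cons b l' =>
      rw [adjPairs, List.mem_cons] at h
      replace hch := List.isChain_cons_cons.1 hch
      rcases h with h | h
      · rw [Prod.mk.injEq] at h
        obtain ⟨rfl, rfl⟩ := h
        exact hch.1
      · exact ih hch.2 h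

lemma adjPairs_inj1 {l : List V} (hnd : l.Nodup) {u v w : V}
    (h1 : (u, v) ∈ adjPairs l) (h2 : (u, w) ∈ adjPairs l) : v = w := by
  induction l with
  | nil => simp [adjPairs] at h1
  | cons a l ih =>
    cases l with
    | nil => simp [adjPairs] at h1
    | cons b l' =>
      rw [adjPairs, List.mem_cons] at h1 h2
      rw [List.nodup_cons] at hnd
      rcases h1 with h1 | h1 <;> rcases h2 with h2 | h2
      · rw [Prod.mk.injEq] at h1
        obtain ⟨rfl, rfl⟩ := h1
        rw [Prod.mk.injEq] at h2
        obtain ⟨-, rfl⟩ := h2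
        rfl
      · rw [Prod.mk.injEq] at h1
        obtain ⟨rfl, rfl⟩ := h1
        exact absurd ((adjPairs_mem h2).1) (by
          intro hm
          exact hnd.1 (List.mem_of_mem_dropLast hm))
      · rw [Prod.mk.injEq] at h2
        obtain ⟨rfl, rfl⟩ := h2
        exact absurd ((adjPairs_mem h1).1) (by
          intro hm
          exact hnd.1 (List.mem_of_mem_dropLast hm))
      · exact ih hnd.2 h1 h2

lemma adjPairs_inj2 {l : List V} (hnd : l.Nodup) {u v w : V}
    (h1 : (u, v) ∈ adjPairs l) (h2 : (w, v) ∈ adjPairs l) : u = w := by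
  induction l with
  | nil => simp [adjPairs] at h1
  | cons a l ih =>
    cases l with
    | nil => simp [adjPairs] at h1
    | cons b l' =>
      rw [adjPairs, List.mem_cons] at h1 h2
      rw [List.nodup_cons] at hnd
      rcases h1 with h1 | h1 <;> rcases h2 with h2 | h2
      · rw [Prod.mk.injEq] at h1
        obtain ⟨rfl, rfl⟩ := h1
        rw [Prod.mk.injEq] at h2
        obtain ⟨rfl, -⟩ := h2
        rfl
      · rw [Prod.mk.injEq] at h1
        obtain ⟨rfl, rfl⟩ := h1
        have := (adjPairs_mem h2).2
        rw [List.tail_cons] at this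
        exact absurd this (by
          have := (List.nodup_cons.1 hnd.2).1
          exact fun hm => this hm)
      · rw [Prod.mk.injEq] at h2
        obtain ⟨rfl, rfl⟩ := h2
        have := (adjPairs_mem h1).2
        rw [List.tail_cons] at this
        exact absurd this (by
          have := (List.nodup_cons.1 hnd.2).1
          exact fun hm => this hm)
      · exact ih hnd.2 h1 h2

lemma adjPairs_nodup {l : List V} (hnd : l.Nodup) : (adjPairs l).Nodup := by
  induction l with
  | nil => simp [adjPairs]
  | cons a l ih =>
    cases l with
    | nil => simp [adjPairs]
    | cons b l' =>
      rw [adjPairs, List.nodup_cons]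
      rw [List.nodup_cons] at hnd
      refine ⟨?_, ih hnd.2⟩
      intro hmem
      exact hnd.1 (List.mem_of_mem_dropLast (adjPairs_mem hmem).1)

lemma adjPairs_length {l : List V} (h : l ≠ []) :
    (adjPairs l).length + 1 = l.length := by
  induction l with
  | nil => exact absurd rfl h
  | cons a l ih =>
    cases l with
    | nil => simp [adjPairs]
    | cons b l' =>
      rw [adjPairs, List.length_cons, List.length_cons,
        ih (List.cons_ne_nil b l')]

lemma adjPairs_fst_mem {l : List V} {u v : V} (h : (u, v) ∈ adjPairs l) : u ∈ l :=
  List.mem_of_mem_dropLast (adjPairs_mem h).1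

lemma adjPairs_snd_mem {l : List V} {u v : V} (h : (u, v) ∈ adjPairs l) : v ∈ l :=
  List.mem_of_mem_tail (adjPairs_mem h).2

end
section
variable {V : Type*} [Fintype V] [DecidableEq V]

lemma pathRank_le_aux [Nonempty V] (G : V → V → Prop) (Z Y : Finset V) :
    pathRank G Z Y + Fintype.card V ≤ edgeRank G Yᶜ Zᶜ + Y.card + Z.card := by
  obtain ⟨P, hP, hPcard⟩ := pathRank_spec (G := G) (Z := Z) (Y := Y)
  set P' := P.image (fun p => truncPath Y Z p) with hP'def
  have hspec : ∀ p ∈ P, (truncPath Y Z p).Sublist p ∧ IsDiPath G (truncPath Y Z p) ∧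
      (∃ a ∈ Y, (truncPath Y Z p).head? = some a) ∧
      (∃ b ∈ Z, (truncPath Y Z p).getLast? = some b) ∧
      (∀ v ∈ (truncPath Y Z p).tail, v ∉ Y) ∧
      (∀ v ∈ (truncPath Y Z p).dropLast, v ∉ Z) := by
    intro p hp
    obtain ⟨hdi, hh, hl⟩ := hP.1 p hp
    exact truncPath_spec hdi hh hl
  have hmem' : ∀ q ∈ P', ∃ p ∈ P, q = truncPath Y Z p := by
    intro q hq
    obtain ⟨p, hp, rfl⟩ := Finset.mem_image.1 hq
    exact ⟨p, hp, rfl⟩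
  have hq' : ∀ q ∈ P', IsDiPath G q ∧ (∃ a ∈ Y, q.head? = some a) ∧
      (∃ b ∈ Z, q.getLast? = some b) ∧ (∀ v ∈ q.tail, v ∉ Y) ∧
      (∀ v ∈ q.dropLast, v ∉ Z) := by
    intro q hq
    obtain ⟨p, hp, rfl⟩ := hmem' q hq
    obtain ⟨-, h2, h3, h4, h5, h6⟩ := hspec p hp
    exact ⟨h2, h3, h4, h5, h6⟩
  have hdisj : ∀ q₁ ∈ P', ∀ q₂ ∈ P', q₁ ≠ q₂ → ∀ v, v ∈ q₁ → v ∉ q₂ := by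
    intro q₁ hq₁ q₂ hq₂ hne v hv1 hv2
    obtain ⟨p₁, hp₁, rfl⟩ := hmem' _ hq₁
    obtain ⟨p₂, hp₂, rfl⟩ := hmem' _ hq₂
    have hpne : p₁ ≠ p₂ := fun h => hne (by rw [h])
    exact hP.2 (Finset.mem_coe.2 hp₁) (Finset.mem_coe.2 hp₂) hpne v
      ((hspec p₁ hp₁).1.subset hv1) ((hspec p₂ hp₂).1.subset hv2)
  have hcardP' : P'.card = P.card := Finset.card_image_of_injOn (by
    intro p₁ hp₁ p₂ hp₂ heq
    simp only at heq
    by_contra hpne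
    have hne1 : truncPath Y Z p₁ ≠ [] := (hspec p₁ hp₁).2.1.1
    obtain ⟨v, hv⟩ := List.exists_mem_of_ne_nil _ hne1
    exact hP.2 hp₁ hp₂ hpne v ((hspec p₁ hp₁).1.subset hv)
      ((hspec p₂ hp₂).1.subset (heq ▸ hv)))
  set used := P'.biUnion (fun q => q.toFinset) with husedef
  set sE := P'.biUnion (fun q => (adjPairs q).toFinset) with hsEdef
  set sI := (Y ∪ Z ∪ used)ᶜ.image (fun w => (w, w)) with hsIdef
  set s := sE ∪ sI with hsdef
  have hused_mem : ∀ q ∈ P', ∀ v ∈ q, v ∈ used := by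
    intro q hq v hv
    exact Finset.mem_biUnion.2 ⟨q, hq, List.mem_toFinset.2 hv⟩
  have hsE_fst : ∀ x ∈ sE, x.1 ∈ used := by
    intro x hx
    obtain ⟨q, hq, hxq⟩ := Finset.mem_biUnion.1 hx
    rw [List.mem_toFinset] at hxq
    have hxq' : (x.1, x.2) ∈ adjPairs q := by rwa [Prod.mk.eta]
    exact hused_mem q hq _ (adjPairs_fst_mem hxq')
  have hsI_elim : ∀ x ∈ sI, x.2 = x.1 ∧ x.1 ∉ Y ∧ x.1 ∉ Z ∧ x.1 ∉ used := by
    intro x hx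
    obtain ⟨w, hw, rfl⟩ := Finset.mem_image.1 hx
    rw [Finset.mem_compl, Finset.mem_union, Finset.mem_union] at hw
    push_neg at hw
    exact ⟨rfl, hw.1.1, hw.1.2, hw.2⟩
  have hmatch : IsMatching G Yᶜ Zᶜ s := by
    refine ⟨?_, ?_, ?_⟩
    · intro x hx
      rcases Finset.mem_union.1 hx with hx | hx
      · obtain ⟨q, hq, hxq⟩ := Finset.mem_biUnion.1 hx
        rw [List.mem_toFinset] at hxq
        have hxq' : (x.1, x.2) ∈ adjPairs q := by rwa [Prod.mk.eta]
        obtain ⟨hdi, -, -, h4, h5⟩ := hq' q hq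
        exact ⟨Finset.mem_compl.2 (h5 x.1 (adjPairs_mem hxq').1),
          Finset.mem_compl.2 (h4 x.2 (adjPairs_mem hxq').2),
          Or.inl (adjPairs_chain' hdi.2.1 hxq')⟩
      · obtain ⟨heq, h1, h2, -⟩ := hsI_elim x hx
        exact ⟨Finset.mem_compl.2 h2, Finset.mem_compl.2 (heq ▸ h1), Or.inr heq.symm⟩
    · intro x hx y hy hxy
      rcases Finset.mem_union.1 hx with hx | hx <;> rcases Finset.mem_union.1 hy with hy | hy
      · obtain ⟨q₁, hq₁, hxq₁⟩ := Finset.mem_biUnion.1 hx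
        obtain ⟨q₂, hq₂, hyq₂⟩ := Finset.mem_biUnion.1 hy
        rw [List.mem_toFinset] at hxq₁ hyq₂
        have hxq' : (x.1, x.2) ∈ adjPairs q₁ := by rwa [Prod.mk.eta]
        have hyq' : (y.1, y.2) ∈ adjPairs q₂ := by rwa [Prod.mk.eta]
        have hqeq : q₁ = q₂ := by
          by_contra hne
          exact hdisj q₁ hq₁ q₂ hq₂ hne x.1 (adjPairs_fst_mem hxq')
            (hxy ▸ adjPairs_fst_mem hyq')
        subst hqeq
        have hnd := (hq' q₁ hq₁).1.2.2
        have : x.2 = y.2 := adjPairs_inj1 hnd (hxy ▸ hxq') hyq'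
        exact Prod.ext hxy this
      · exact absurd (hsE_fst x hx) (hxy ▸ (hsI_elim y hy).2.2.2)
      · exact absurd (hsE_fst y hy) (hxy ▸ (hsI_elim x hx).2.2.2)
      · obtain ⟨hx2, -⟩ := hsI_elim x hx
        obtain ⟨hy2, -⟩ := hsI_elim y hy
        exact Prod.ext hxy (by rw [hx2, hy2, hxy])
    · intro x hx y hy hxy
      rcases Finset.mem_union.1 hx with hx | hx <;> rcases Finset.mem_union.1 hy with hy | hy
      · obtain ⟨q₁, hq₁, hxq₁⟩ := Finset.mem_biUnion.1 hx
        obtain ⟨q₂, hq₂, hyq₂⟩ := Finset.mem_biUnion.1 hy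
        rw [List.mem_toFinset] at hxq₁ hyq₂
        have hxq' : (x.1, x.2) ∈ adjPairs q₁ := by rwa [Prod.mk.eta]
        have hyq' : (y.1, y.2) ∈ adjPairs q₂ := by rwa [Prod.mk.eta]
        have hqeq : q₁ = q₂ := by
          by_contra hne
          exact hdisj q₁ hq₁ q₂ hq₂ hne x.2 (adjPairs_snd_mem hxq')
            (hxy ▸ adjPairs_snd_mem hyq')
        subst hqeq
        have hnd := (hq' q₁ hq₁).1.2.2
        have : x.1 = y.1 := adjPairs_inj2 hnd (hxy ▸ hxq') hyq'
        exact Prod.ext this hxy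
      · obtain ⟨q₁, hq₁, hxq₁⟩ := Finset.mem_biUnion.1 hx
        rw [List.mem_toFinset] at hxq₁
        have hxq' : (x.1, x.2) ∈ adjPairs q₁ := by rwa [Prod.mk.eta]
        have h2 : x.2 ∈ used := hused_mem q₁ hq₁ _ (adjPairs_snd_mem hxq')
        obtain ⟨hy2, -, -, hy4⟩ := hsI_elim y hy
        exact absurd h2 (by rw [hxy, hy2]; exact hy4)
      · obtain ⟨q₁, hq₁, hyq₁⟩ := Finset.mem_biUnion.1 hy
        rw [List.mem_toFinset] at hyq₁
        have hyq' : (y.1, y.2) ∈ adjPairs q₁ := by rwa [Prod.mk.eta]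
        have h2 : y.2 ∈ used := hused_mem q₁ hq₁ _ (adjPairs_snd_mem hyq')
        obtain ⟨hx2, -, -, hx4⟩ := hsI_elim x hx
        exact absurd h2 (by rw [← hxy, hx2]; exact hx4)
      · obtain ⟨hx2, -⟩ := hsI_elim x hx
        obtain ⟨hy2, -⟩ := hsI_elim y hy
        exact Prod.ext (by rw [← hx2, ← hy2, hxy]) hxy
  -- cardinalities
  have hdisjE : ∀ q₁ ∈ P', ∀ q₂ ∈ P', q₁ ≠ q₂ →
      Disjoint ((adjPairs q₁).toFinset) ((adjPairs q₂).toFinset) := by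
    intro q₁ hq₁ q₂ hq₂ hne
    rw [Finset.disjoint_left]
    intro x hx1 hx2
    rw [List.mem_toFinset] at hx1 hx2
    have hx1' : (x.1, x.2) ∈ adjPairs q₁ := by rwa [Prod.mk.eta]
    have hx2' : (x.1, x.2) ∈ adjPairs q₂ := by rwa [Prod.mk.eta]
    exact hdisj q₁ hq₁ q₂ hq₂ hne x.1 (adjPairs_fst_mem hx1') (adjPairs_fst_mem hx2')
  have hdisjU : ∀ q₁ ∈ P', ∀ q₂ ∈ P', q₁ ≠ q₂ → Disjoint q₁.toFinset q₂.toFinset := by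
    intro q₁ hq₁ q₂ hq₂ hne
    rw [Finset.disjoint_left]
    intro v hv1 hv2
    rw [List.mem_toFinset] at hv1 hv2
    exact hdisj q₁ hq₁ q₂ hq₂ hne v hv1 hv2
  have c1 : sE.card = ∑ q ∈ P', (adjPairs q).length := by
    rw [hsEdef, Finset.card_biUnion hdisjE]
    exact Finset.sum_congr rfl fun q hq =>
      List.toFinset_card_of_nodup (adjPairs_nodup (hq' q hq).1.2.2)
  have c2 : used.card = ∑ q ∈ P', q.length := by
    rw [husedef, Finset.card_biUnion hdisjU]
    exact Finset.sum_congr rfl fun q hq => List.toFinset_card_of_nodup (hq' q hq).1.2.2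
  have c5 : (∑ q ∈ P', (adjPairs q).length) + P'.card = ∑ q ∈ P', q.length := by
    have : ∑ q ∈ P', q.length = ∑ q ∈ P', ((adjPairs q).length + 1) :=
      Finset.sum_congr rfl fun q hq => (adjPairs_length (hq' q hq).1.1).symm
    rw [this, Finset.sum_add_distrib, Finset.sum_const, smul_eq_mul, mul_one]
  have c3 : sI.card = (Y ∪ Z ∪ used)ᶜ.card := by
    rw [hsIdef]
    exact Finset.card_image_of_injOn fun a _ b _ h => by simpa using congrArg Prod.fst h
  have c4 : s.card = sE.card + sI.card := by
    rw [hsdef]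
    refine Finset.card_union_of_disjoint (Finset.disjoint_left.2 fun x hx1 hx2 => ?_)
    exact (hsI_elim x hx2).2.2.2 (hsE_fst x hx1)
  have c6 : (Y ∪ Z ∪ used).card + (Y ∪ Z ∪ used)ᶜ.card = Fintype.card V :=
    Finset.card_add_card_compl _
  have c7 : (Y ∪ Z ∪ used).card + ((Y ∪ Z) ∩ used).card = (Y ∪ Z).card + used.card :=
    Finset.card_union_add_card_inter _ _
  have c8 : (Y ∪ Z).card + (Y ∩ Z).card = Y.card + Z.card :=
    Finset.card_union_add_card_inter _ _
  have c9 : 2 * P'.card ≤ (Y ∩ Z).card + ((Y ∪ Z) ∩ used).card := by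
    haveI : Inhabited V := Classical.inhabited_of_nonempty inferInstance
    set d := (default : V) with hd
    set H := P'.image List.headI with hHdef
    set L := P'.image (fun q => q.getLastD d) with hLdef
    have hHmem : ∀ q ∈ P', q.headI ∈ q ∧ q.headI ∈ Y := by
      intro q hq
      obtain ⟨a, haY, ha⟩ := (hq' q hq).2.1
      obtain ⟨c, t, rfl⟩ := List.exists_cons_of_ne_nil (hq' q hq).1.1
      rw [List.head?_cons, Option.some.injEq] at ha
      subst ha
      exact ⟨List.mem_cons_self, haY⟩
    have hLmem : ∀ q ∈ P', q.getLastD d ∈ q ∧ q.getLastD d ∈ Z := by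
      intro q hq
      obtain ⟨b, hbZ, hb⟩ := (hq' q hq).2.2.1
      have heq : q.getLastD d = b := by rw [List.getLastD_eq_getLast?, hb]; rfl
      rw [heq]
      exact ⟨List.mem_of_mem_getLast? (by simp [hb]), hbZ⟩
    have hHcard : H.card = P'.card := Finset.card_image_of_injOn (by
      intro q₁ h1 q₂ h2 heq
      by_contra hne
      exact hdisj q₁ (Finset.mem_coe.1 h1) q₂ (Finset.mem_coe.1 h2) hne q₁.headI
        (hHmem q₁ (Finset.mem_coe.1 h1)).1
        (by rw [heq]; exact (hHmem q₂ (Finset.mem_coe.1 h2)).1))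
    have hLcard : L.card = P'.card := Finset.card_image_of_injOn (by
      intro q₁ h1 q₂ h2 heq
      simp only at heq
      by_contra hne
      exact hdisj q₁ (Finset.mem_coe.1 h1) q₂ (Finset.mem_coe.1 h2) hne (q₁.getLastD d)
        (hLmem q₁ (Finset.mem_coe.1 h1)).1
        (by rw [heq]; exact (hLmem q₂ (Finset.mem_coe.1 h2)).1))
    have hsubU : H ∪ L ⊆ (Y ∪ Z) ∩ used := by
      intro v hv
      rcases Finset.mem_union.1 hv with hv | hv
      · obtain ⟨q, hq, rfl⟩ := Finset.mem_image.1 hv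
        exact Finset.mem_inter.2 ⟨Finset.mem_union_left _ (hHmem q hq).2,
          hused_mem q hq _ (hHmem q hq).1⟩
      · obtain ⟨q, hq, rfl⟩ := Finset.mem_image.1 hv
        exact Finset.mem_inter.2 ⟨Finset.mem_union_right _ (hLmem q hq).2,
          hused_mem q hq _ (hLmem q hq).1⟩
    have hsubI : H ∩ L ⊆ Y ∩ Z := by
      intro v hv
      rw [Finset.mem_inter] at hv
      obtain ⟨q, hq, rfl⟩ := Finset.mem_image.1 hv.1
      obtain ⟨q', hq', heq⟩ := Finset.mem_image.1 hv.2
      exact Finset.mem_inter.2 ⟨(hHmem q hq).2, heq ▸ (hLmem q' hq').2⟩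
    have h1 := Finset.card_union_add_card_inter H L
    have h2 := Finset.card_le_card hsubU
    have h3 := Finset.card_le_card hsubI
    omega
  have hle : s.card ≤ edgeRank G Yᶜ Zᶜ := le_edgeRank hmatch
  rw [← hPcard, ← hcardP']
  omega

lemma edgeRank_le_aux (G : V → V → Prop) (Z Y : Finset V) :
    edgeRank G Yᶜ Zᶜ + Y.card + Z.card ≤ pathRank G Z Y + Fintype.card V := by
  obtain ⟨s, hm, hc⟩ := edgeRank_spec (G := G) (Z := Yᶜ) (Y := Zᶜ)
  have hs : ∀ p ∈ s, p.1 ∈ Finset.univ \ Z ∧ p.2 ∈ Finset.univ \ Y ∧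
      (G p.1 p.2 ∨ p.1 = p.2) := by
    intro p hp
    obtain ⟨h1, h2, h3⟩ := hm.1 p hp
    rw [Finset.compl_eq_univ_sdiff] at h1 h2
    exact ⟨h1, h2, h3⟩
  obtain ⟨P, hPfam, -, hineq⟩ := exists_pathFamily_of_matching G _ Finset.univ Y Z s
    (Finset.subset_univ Y) (Finset.subset_univ Z) hs hm.2.1 hm.2.2 rfl
  rw [← hc]
  calc s.card + Y.card + Z.card ≤ P.card + Finset.univ.card := hineq
    _ ≤ pathRank G Z Y + Fintype.card V := by
        rw [Finset.card_univ]
        exact Nat.add_le_add_right (le_pathRank hPfam) _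

end

/-- **Duality between path ranks and edge ranks.** For any vertex sets `Z, Y`:
`min(|Z|,|Y|) − ρ_G(Z,Y) = |V| − max(|Z|,|Y|) − r_G(V∖Y, V∖Z)`. -/
theorem pathRank_edgeRank_duality {V : Type*} [Fintype V] [DecidableEq V]
    (G : V → V → Prop) (hloop : ∀ v, ¬ G v v) (Z Y : Finset V) :
    (min Z.card Y.card : ℤ) - pathRank G Z Y =
      (Fintype.card V : ℤ) - max Z.card Y.card - edgeRank G Yᶜ Zᶜ := by
  rcases isEmpty_or_nonempty V with hV | hV
  · have h0 : Fintype.card V = 0 := Fintype.card_eq_zero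
    have hY : Y.card = 0 := Nat.le_zero.1 (h0 ▸ Finset.card_le_univ Y)
    have hZ : Z.card = 0 := Nat.le_zero.1 (h0 ▸ Finset.card_le_univ Z)
    have hρ : pathRank G Z Y = 0 := by
      obtain ⟨P, hP, hc⟩ := pathRank_spec (G := G) (Z := Z) (Y := Y)
      rw [← hc, Finset.card_eq_zero]
      by_contra hne
      obtain ⟨p, hp⟩ := Finset.nonempty_iff_ne_empty.2 hne
      obtain ⟨a, t, -⟩ := List.exists_cons_of_ne_nil (hP.1 p hp).1.1
      exact hV.elim a
    have hr : edgeRank G Yᶜ Zᶜ = 0 := by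
      obtain ⟨s, hm, hc⟩ := edgeRank_spec (G := G) (Z := Yᶜ) (Y := Zᶜ)
      rw [← hc, Finset.card_eq_zero]
      by_contra hne
      obtain ⟨x, hx⟩ := Finset.nonempty_iff_ne_empty.2 hne
      exact hV.elim x.1
    rw [hρ, hr, hY, hZ, h0]
    simp
  · have hA := edgeRank_le_aux G Z Y
    have hB := pathRank_le_aux G Z Y
    omega
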